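/- arXiv:1911.04351 — 2 statements merged into one kernel-verified Lean document; each statement's English description precedes it below -/
import Mathlib

section
/- Let φ : ℝ → ℝ satisfy |φ'(z)| ≤ B. Consider the one-hidden-layer network f(W) = (φ(x_i^T W^T) v)_{i=1}^n with data matrix X ∈ ℝ^{n×d} (rows x_i) and output weights v ∈ ℝ^k. Then the Jacobian of f with respect to W (viewed as a matrix in ℝ^{n × kd}) has operator norm at most √k · B · ‖v‖_∞ · ‖X‖, where ‖X‖ is the operator norm of X. -/
noncomputable def opNorm {α β : Type*} [Fintype α] [Fintype β] [DecidableEq β]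
    (M : Matrix α β ℝ) : ℝ :=
  ‖LinearMap.toContinuousLinearMap (Matrix.toEuclideanLin M)‖

theorem stmt_10 {n d k : ℕ} (φ φ' : ℝ → ℝ) (B : ℝ)
    (hd : ∀ z, HasDerivAt φ (φ' z) z)
    (hB : ∀ z, |φ' z| ≤ B)
    (X : Matrix (Fin n) (Fin d) ℝ) (v : Fin k → ℝ) (W : Matrix (Fin k) (Fin d) ℝ) :
    opNorm (Matrix.of fun (i : Fin n) (p : Fin k × Fin d) =>
        v p.1 * φ' ((W.mulVec (X i)) p.1) * X i p.2) ≤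
      Real.sqrt k * B * ‖v‖ * opNorm X := by
  have hB0 : 0 ≤ B := (abs_nonneg _).trans (hB 0)
  have hX0 : 0 ≤ opNorm X := norm_nonneg _
  set J : Matrix (Fin n) (Fin k × Fin d) ℝ := Matrix.of fun (i : Fin n) (p : Fin k × Fin d) =>
        v p.1 * φ' ((W.mulVec (X i)) p.1) * X i p.2 with hJ
  have hC0 : 0 ≤ Real.sqrt k * B * ‖v‖ * opNorm X := by positivity
  refine ContinuousLinearMap.opNorm_le_bound _ hC0 ?_
  intro u
  -- t i j : result of X acting on the j-th slice of u
  set t : Fin n → Fin k → ℝ := fun i j => ∑ l, X i l * u (j, l) with ht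
  -- pointwise value of J u
  have hval : ∀ i, (LinearMap.toContinuousLinearMap (Matrix.toEuclideanLin J)) u i
      = ∑ j, (v j * φ' ((W.mulVec (X i)) j)) * t i j := by
    intro i
    show (Matrix.toEuclideanLin J u) i = _
    rw [Matrix.toEuclideanLin_apply]
    show (J.mulVec (WithLp.equiv 2 _ u)) i = _
    simp only [Matrix.mulVec, dotProduct, hJ, Matrix.of_apply, ht]
    rw [Fintype.sum_prod_type]
    refine Finset.sum_congr rfl fun j _ => ?_
    rw [Finset.mul_sum]
    refine Finset.sum_congr rfl fun l _ => ?_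
    show v j * φ' _ * X i l * u (j, l) = _
    ring
  -- slices of u
  set g : Fin k → EuclideanSpace ℝ (Fin d) := fun j => (WithLp.equiv 2 _).symm (fun l => u (j, l)) with hg
  have hXg : ∀ j, ∑ i, (t i j)^2 ≤ (opNorm X * ‖g j‖)^2 := by
    intro j
    have h1 : ‖(LinearMap.toContinuousLinearMap (Matrix.toEuclideanLin X)) (g j)‖
        ≤ opNorm X * ‖g j‖ := ContinuousLinearMap.le_opNorm _ _
    have h2 : ‖(LinearMap.toContinuousLinearMap (Matrix.toEuclideanLin X)) (g j)‖^2
        = ∑ i, (t i j)^2 := by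
      rw [EuclideanSpace.norm_eq, Real.sq_sqrt (by positivity)]
      refine Finset.sum_congr rfl fun i _ => ?_
      rw [Real.norm_eq_abs, sq_abs]
      rfl
    rw [← h2]
    exact pow_le_pow_left₀ (norm_nonneg _) h1 2
  have hsq : ‖(LinearMap.toContinuousLinearMap (Matrix.toEuclideanLin J)) u‖^2
      ≤ (Real.sqrt k * B * ‖v‖ * opNorm X * ‖u‖)^2 := by
    rw [EuclideanSpace.norm_eq, Real.sq_sqrt (by positivity)]
    have key : ∀ i, ‖(LinearMap.toContinuousLinearMap (Matrix.toEuclideanLin J)) u i‖^2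
        ≤ (B * ‖v‖)^2 * (k * ∑ j, (t i j)^2) := by
      intro i
      rw [Real.norm_eq_abs, sq_abs, hval i]
      have habs : |∑ j, (v j * φ' ((W.mulVec (X i)) j)) * t i j|
          ≤ (B * ‖v‖) * ∑ j, |t i j| := by
        refine (Finset.abs_sum_le_sum_abs _ _).trans ?_
        rw [Finset.mul_sum]
        refine Finset.sum_le_sum fun j _ => ?_
        rw [abs_mul, abs_mul]
        have hv : |v j| ≤ ‖v‖ := by
          simpa [Real.norm_eq_abs] using norm_le_pi_norm v j
        exact mul_le_mul (mul_le_mul hv (hB _) (abs_nonneg _) (norm_nonneg _))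
          le_rfl (abs_nonneg _) (by positivity) |>.trans_eq (by ring)
      calc (∑ j, (v j * φ' ((W.mulVec (X i)) j)) * t i j)^2
          ≤ ((B * ‖v‖) * ∑ j, |t i j|)^2 := by
            rw [← sq_abs]
            exact pow_le_pow_left₀ (abs_nonneg _) habs 2
        _ = (B * ‖v‖)^2 * (∑ j, |t i j|)^2 := by ring
        _ ≤ (B * ‖v‖)^2 * (k * ∑ j, |t i j|^2) := by
            refine mul_le_mul_of_nonneg_left ?_ (by positivity)
            simpa using sq_sum_le_card_mul_sum_sq (s := Finset.univ) (f := fun j => |t i j|)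
        _ = (B * ‖v‖)^2 * (k * ∑ j, (t i j)^2) := by simp [sq_abs]
    calc ∑ i, ‖(LinearMap.toContinuousLinearMap (Matrix.toEuclideanLin J)) u i‖^2
        ≤ ∑ i, (B * ‖v‖)^2 * (k * ∑ j, (t i j)^2) := Finset.sum_le_sum fun i _ => key i
      _ = (B * ‖v‖)^2 * k * ∑ i, ∑ j, (t i j)^2 := by
          conv_rhs => rw [Finset.mul_sum]
          exact Finset.sum_congr rfl fun i _ => by ring
      _ = (B * ‖v‖)^2 * k * ∑ j, ∑ i, (t i j)^2 := by
          rw [Finset.sum_comm]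
      _ ≤ (B * ‖v‖)^2 * k * ∑ j, (opNorm X * ‖g j‖)^2 := by
          refine mul_le_mul_of_nonneg_left (Finset.sum_le_sum fun j _ => hXg j) (by positivity)
      _ = (B * ‖v‖)^2 * k * (opNorm X^2 * ∑ j, ‖g j‖^2) := by
          conv_lhs => rw [Finset.mul_sum]
          conv_rhs => rw [Finset.mul_sum, Finset.mul_sum]
          exact Finset.sum_congr rfl fun j _ => by ring
      _ = (Real.sqrt k * B * ‖v‖ * opNorm X * ‖u‖)^2 := by
          have hgu : ∑ j, ‖g j‖^2 = ‖u‖^2 := by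
            rw [EuclideanSpace.norm_eq, Real.sq_sqrt (by positivity)]
            rw [Fintype.sum_prod_type]
            refine Finset.sum_congr rfl fun j _ => ?_
            rw [EuclideanSpace.norm_eq, Real.sq_sqrt (by positivity)]
            rfl
          rw [hgu]
          have hs : Real.sqrt k ^ 2 = (k : ℝ) := Real.sq_sqrt (Nat.cast_nonneg k)
          simp only [mul_pow, hs]
          ring
  have h1 : 0 ≤ Real.sqrt k * B * ‖v‖ * opNorm X * ‖u‖ := by positivity
  exact (pow_le_pow_iff_left₀ (norm_nonneg _) h1 two_ne_zero).mp hsq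
end

section
/- Let φ : ℝ → ℝ satisfy |φ''(z)| ≤ M, let v ∈ ℝ^k, and let x₁,…,x_n ∈ ℝ^d have unit norm, forming rows of X ∈ ℝ^{n×d}. For the one-hidden-layer network f(W)_i = v^T φ(W x_i), the Jacobian map W ↦ 𝒥(W) ∈ ℝ^{n×kd} is Lipschitz in Frobenius norm: ‖𝒥(W̃) − 𝒥(W)‖ ≤ M · ‖v‖_∞ · ‖X‖ · ‖W̃ − W‖_F for all W̃, W ∈ ℝ^{k×d}. -/
noncomputable def frobNorm {α β : Type*} [Fintype α] [Fintype β]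
    (M : Matrix α β ℝ) : ℝ :=
  Real.sqrt (∑ i, ∑ j, (M i j) ^ 2)

/-- The `n × kd` Jacobian of the one-hidden-layer network `W ↦ (vᵀ φ(W xᵢ))ᵢ`. -/
noncomputable def jac {n d k : ℕ} (φ' : ℝ → ℝ) (X : Matrix (Fin n) (Fin d) ℝ)
    (v : Fin k → ℝ) (W : Matrix (Fin k) (Fin d) ℝ) :
    Matrix (Fin n) (Fin k × Fin d) ℝ :=
  Matrix.of fun i p => v p.1 * φ' ((W.mulVec (X i)) p.1) * X i p.2

open Matrix in
lemma frobNorm_nonneg {α β : Type*} [Fintype α] [Fintype β] (A : Matrix α β ℝ) :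
    0 ≤ frobNorm A := Real.sqrt_nonneg _

lemma sq_frobNorm {α β : Type*} [Fintype α] [Fintype β] (A : Matrix α β ℝ) :
    frobNorm A ^ 2 = ∑ i, ∑ j, (A i j) ^ 2 := by
  rw [frobNorm, Real.sq_sqrt]
  positivity

/-- Norm of the Euclidean image of a vector, squared. -/
lemma euc_norm_sq {m : Type*} [Fintype m] (x : m → ℝ) :
    ‖(WithLp.equiv 2 (m → ℝ)).symm x‖ ^ 2 = ∑ j, (x j) ^ 2 := by
  rw [EuclideanSpace.norm_eq, Real.sq_sqrt (by positivity)]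
  simp [sq_abs]

lemma mulVec_sq_le {a b : Type*} [Fintype a] [Fintype b] [DecidableEq b]
    (A : Matrix a b ℝ) (x : b → ℝ) :
    ∑ i, (A.mulVec x i) ^ 2 ≤ (opNorm A * ‖(WithLp.equiv 2 (b → ℝ)).symm x‖) ^ 2 := by
  have h := (LinearMap.toContinuousLinearMap (Matrix.toEuclideanLin A)).le_opNorm
      ((WithLp.equiv 2 (b → ℝ)).symm x)
  have h2 : ‖LinearMap.toContinuousLinearMap (Matrix.toEuclideanLin A)
      ((WithLp.equiv 2 (b → ℝ)).symm x)‖ ^ 2 = ∑ i, (A.mulVec x i) ^ 2 := by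
    rw [show (LinearMap.toContinuousLinearMap (Matrix.toEuclideanLin A))
        ((WithLp.equiv 2 (b → ℝ)).symm x)
        = (WithLp.equiv 2 (a → ℝ)).symm (A.mulVec x) from by
      simp [Matrix.toEuclideanLin_apply]]
    exact euc_norm_sq _
  calc ∑ i, (A.mulVec x i) ^ 2 = _ := h2.symm
    _ ≤ _ := by
        apply pow_le_pow_left₀ (norm_nonneg _) h
    _ = _ := by rw [opNorm]

lemma sq_opNorm_le {a b : Type*} [Fintype a] [Fintype b] [DecidableEq b]
    (A : Matrix a b ℝ) (x : b → ℝ)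
    (hx : ‖(WithLp.equiv 2 (b → ℝ)).symm x‖ = 1) :
    ∑ i, (A.mulVec x i) ^ 2 ≤ opNorm A ^ 2 := by
  have := mulVec_sq_le A x
  rwa [hx, mul_one] at this

lemma lip_phi' (φ' φ'' : ℝ → ℝ) (M : ℝ)
    (hd2 : ∀ z, HasDerivAt φ' (φ'' z) z) (hM : ∀ z, |φ'' z| ≤ M)
    (a b : ℝ) : |φ' b - φ' a| ≤ M * |b - a| := by
  have h := Convex.norm_image_sub_le_of_norm_hasDerivWithin_le
    (f := φ') (f' := φ'') (s := Set.univ) (C := M)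
    (fun z _ => (hd2 z).hasDerivWithinAt)
    (fun z _ => by simpa [Real.norm_eq_abs] using hM z)
    convex_univ (Set.mem_univ a) (Set.mem_univ b)
  simpa [Real.norm_eq_abs] using h

lemma le_of_sq_le' {x y : ℝ} (hx : 0 ≤ x) (hy : 0 ≤ y) (h : x ^ 2 ≤ y ^ 2) : x ≤ y := by
  nlinarith

lemma opNorm_le_frobNorm {a b : Type*} [Fintype a] [Fintype b] [DecidableEq b]
    (A : Matrix a b ℝ) :
    opNorm A ≤ frobNorm A := by
  apply ContinuousLinearMap.opNorm_le_bound _ (frobNorm_nonneg A)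
  intro x
  apply le_of_sq_le' (norm_nonneg _) (mul_nonneg (frobNorm_nonneg A) (norm_nonneg x))
  have hx : x = (WithLp.equiv 2 (b → ℝ)).symm (WithLp.equiv 2 (b → ℝ) x) := rfl
  rw [show (LinearMap.toContinuousLinearMap (Matrix.toEuclideanLin A)) x
      = (WithLp.equiv 2 (a → ℝ)).symm (A.mulVec (WithLp.equiv 2 (b → ℝ) x)) from by
    simp [Matrix.toEuclideanLin_apply]]
  rw [euc_norm_sq, mul_pow, sq_frobNorm]
  rw [hx, euc_norm_sq]
  set y := WithLp.equiv 2 (b → ℝ) x with hy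
  calc ∑ i, (A.mulVec y i) ^ 2
      ≤ ∑ i, (∑ j, (A i j) ^ 2) * (∑ j, (y j) ^ 2) := by
        apply Finset.sum_le_sum
        intro i _
        have : A.mulVec y i = ∑ j, A i j * y j := by
          simp [Matrix.mulVec, dotProduct]
        rw [this]
        exact Finset.sum_mul_sq_le_sq_mul_sq _ _ _
    _ = (∑ i, ∑ j, (A i j) ^ 2) * (∑ j, (y j) ^ 2) := by rw [Finset.sum_mul]

open Matrix in
lemma frobNorm_mul_le {a b c : Type*} [Fintype a] [Fintype b] [Fintype c]
    [DecidableEq b] (A : Matrix a b ℝ) (B : Matrix b c ℝ) :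
    frobNorm (A * B) ≤ opNorm A * frobNorm B := by
  have hA : 0 ≤ opNorm A := norm_nonneg _
  apply le_of_sq_le' (frobNorm_nonneg _) (mul_nonneg hA (frobNorm_nonneg B))
  rw [mul_pow, sq_frobNorm, sq_frobNorm, Finset.sum_comm]
  calc ∑ j, ∑ i, ((A * B) i j) ^ 2
      ≤ ∑ j, opNorm A ^ 2 * (∑ q, (B q j) ^ 2) := by
        apply Finset.sum_le_sum
        intro j _
        have he : ∀ i, (A * B) i j = A.mulVec (fun q => B q j) i := by
          intro i
          simp [Matrix.mul_apply, Matrix.mulVec, dotProduct]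
        simp_rw [he]
        have := mulVec_sq_le A (fun q => B q j)
        rw [mul_pow, euc_norm_sq] at this
        exact this
    _ = opNorm A ^ 2 * ∑ j, ∑ q, (B q j) ^ 2 := by rw [Finset.mul_sum]
    _ = opNorm A ^ 2 * ∑ q, ∑ j, (B q j) ^ 2 := by rw [Finset.sum_comm]

set_option maxHeartbeats 2000000 in
open Matrix in
theorem stmt_11 {n d k : ℕ} (φ φ' φ'' : ℝ → ℝ) (M : ℝ)
    (hd1 : ∀ z, HasDerivAt φ (φ' z) z)
    (hd2 : ∀ z, HasDerivAt φ' (φ'' z) z)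
    (hM : ∀ z, |φ'' z| ≤ M)
    (X : Matrix (Fin n) (Fin d) ℝ)
    (hX : ∀ i, ‖((WithLp.equiv 2 (Fin d → ℝ)).symm (X i))‖ = 1)
    (v : Fin k → ℝ) (Wt W : Matrix (Fin k) (Fin d) ℝ) :
    opNorm (jac φ' X v Wt - jac φ' X v W) ≤
      M * ‖v‖ * opNorm X * frobNorm (Wt - W) := by
  have hM0 : 0 ≤ M := le_trans (abs_nonneg _) (hM 0)
  have hv0 : 0 ≤ ‖v‖ := norm_nonneg _
  set E := Wt - W with hE
  -- Step B : frobNorm of the difference is bounded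
  have hrow : ∀ i, ∑ q, (X i q) ^ 2 = 1 := by
    intro i
    have := euc_norm_sq (X i)
    rw [hX i] at this
    linarith
  have hXE : ∀ i p, (X * Eᵀ) i p = E.mulVec (X i) p := by
    intro i p
    simp [Matrix.mul_apply, Matrix.mulVec, dotProduct, mul_comm]
  have stepB : frobNorm (jac φ' X v Wt - jac φ' X v W)
      ≤ M * ‖v‖ * frobNorm (X * Eᵀ) := by
    apply le_of_sq_le' (frobNorm_nonneg _)
      (mul_nonneg (mul_nonneg hM0 hv0) (frobNorm_nonneg _))
    rw [mul_pow, mul_pow, sq_frobNorm, sq_frobNorm]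
    calc ∑ i, ∑ p : Fin k × Fin d, ((jac φ' X v Wt - jac φ' X v W) i p) ^ 2
        ≤ ∑ i, ∑ p : Fin k × Fin d,
            M ^ 2 * ‖v‖ ^ 2 * (E.mulVec (X i) p.1) ^ 2 * (X i p.2) ^ 2 := by
          apply Finset.sum_le_sum; intro i _
          apply Finset.sum_le_sum; intro p _
          have hentry : (jac φ' X v Wt - jac φ' X v W) i p
              = v p.1 * (φ' ((Wt.mulVec (X i)) p.1) - φ' ((W.mulVec (X i)) p.1)) * X i p.2 := by
            simp [jac]; ring
          rw [hentry]
          have hlip := lip_phi' φ' φ'' M hd2 hM ((W.mulVec (X i)) p.1) ((Wt.mulVec (X i)) p.1)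
          have hsub : Wt.mulVec (X i) p.1 - W.mulVec (X i) p.1 = E.mulVec (X i) p.1 := by
            rw [hE, Matrix.sub_mulVec]; rfl
          rw [hsub] at hlip
          have hvp : |v p.1| ≤ ‖v‖ := norm_le_pi_norm v p.1
          have h1 : (v p.1 * (φ' ((Wt.mulVec (X i)) p.1) - φ' ((W.mulVec (X i)) p.1)) * X i p.2) ^ 2
              = (v p.1) ^ 2 * (φ' ((Wt.mulVec (X i)) p.1) - φ' ((W.mulVec (X i)) p.1)) ^ 2
                * (X i p.2) ^ 2 := by ring
          rw [h1]
          have h2 : (φ' ((Wt.mulVec (X i)) p.1) - φ' ((W.mulVec (X i)) p.1)) ^ 2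
              ≤ M ^ 2 * (E.mulVec (X i) p.1) ^ 2 := by
            have := abs_nonneg (φ' ((Wt.mulVec (X i)) p.1) - φ' ((W.mulVec (X i)) p.1))
            nlinarith [abs_nonneg (E.mulVec (X i) p.1), sq_abs (E.mulVec (X i) p.1),
              sq_abs (φ' ((Wt.mulVec (X i)) p.1) - φ' ((W.mulVec (X i)) p.1))]
          have h3 : (v p.1) ^ 2 ≤ ‖v‖ ^ 2 := by
            rw [← sq_abs]
            exact pow_le_pow_left₀ (abs_nonneg _) hvp 2
          have h4 : (v p.1) ^ 2 * (φ' ((Wt.mulVec (X i)) p.1) - φ' ((W.mulVec (X i)) p.1)) ^ 2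
              ≤ ‖v‖ ^ 2 * (M ^ 2 * (E.mulVec (X i) p.1) ^ 2) :=
            mul_le_mul h3 h2 (sq_nonneg _) (sq_nonneg _)
          calc (v p.1) ^ 2 * (φ' ((Wt.mulVec (X i)) p.1) - φ' ((W.mulVec (X i)) p.1)) ^ 2
                * (X i p.2) ^ 2
              ≤ ‖v‖ ^ 2 * (M ^ 2 * (E.mulVec (X i) p.1) ^ 2) * (X i p.2) ^ 2 :=
                mul_le_mul_of_nonneg_right h4 (sq_nonneg _)
            _ = M ^ 2 * ‖v‖ ^ 2 * (E.mulVec (X i) p.1) ^ 2 * (X i p.2) ^ 2 := by ring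
      _ = M ^ 2 * ‖v‖ ^ 2 * ∑ i, ∑ p, ((X * Eᵀ) i p) ^ 2 := by
          rw [Finset.mul_sum]
          apply Finset.sum_congr rfl
          intro i _
          rw [Fintype.sum_prod_type]
          rw [Finset.mul_sum]
          apply Finset.sum_congr rfl
          intro p _
          have step : ∑ y : Fin d, M ^ 2 * ‖v‖ ^ 2 * (E.mulVec (X i)) p ^ 2 * X i y ^ 2
              = M ^ 2 * ‖v‖ ^ 2 * ((X * Eᵀ) i p) ^ 2 := by
            rw [← Finset.mul_sum, hrow i, mul_one, hXE i p]
          exact step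
  -- Step C : frobNorm (X * Eᵀ) ≤ opNorm X * frobNorm E
  have hEt : frobNorm Eᵀ = frobNorm E := by
    rw [frobNorm, frobNorm, Finset.sum_comm]
    rfl
  calc opNorm (jac φ' X v Wt - jac φ' X v W)
      ≤ frobNorm (jac φ' X v Wt - jac φ' X v W) := opNorm_le_frobNorm _
    _ ≤ M * ‖v‖ * frobNorm (X * Eᵀ) := stepB
    _ ≤ M * ‖v‖ * (opNorm X * frobNorm Eᵀ) := by
        apply mul_le_mul_of_nonneg_left (frobNorm_mul_le X Eᵀ) (by positivity)
    _ = M * ‖v‖ * opNorm X * frobNorm E := by rw [hEt]; ring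
end
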